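/- The set of isolated subgroups of Γ having an immediate predecessor in isolated(Γ) is exactly the set of T-isolated subgroups: IS(isolated(Γ)) = {H_t | t ∈ T}. -/

import Mathlib

/-- The carrier of Γ: functions `T → G` with well-ordered support. -/
def Gamma (T G : Type*) [LinearOrder T] [Zero G] [LT G] : Set (T → G) :=
  {f | (Function.support f).IsWF}

/-- The (left-to-right lexicographic) order on functions `T → G`:
`f ≤ g` iff `f = g` or `f` and `g` agree before some point `t` at which `f t < g t`. -/
def lexLE {T G : Type*} [LinearOrder T] [LT G] (f g : T → G) : Prop :=
  f = g ∨ ∃ t, (∀ s, s < t → f s = g s) ∧ f t < g t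

/-- `H` is an isolated subgroup of Γ: a subgroup of Γ that is convex for the
lexicographic order. -/
def IsIsolated (T G : Type*) [LinearOrder T] [AddCommGroup G] [LinearOrder G] [IsOrderedAddMonoid G]
    (H : Set (T → G)) : Prop :=
  H ⊆ Gamma T G ∧ (0 : T → G) ∈ H ∧ (∀ f ∈ H, ∀ g ∈ H, f + g ∈ H) ∧
  (∀ f ∈ H, -f ∈ H) ∧
  ∀ h ∈ H, ∀ g ∈ Gamma T G, lexLE 0 g → lexLE g h → g ∈ H

/-- The T-isolated subgroup `H_t`: elements of Γ vanishing strictly before `t`. -/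
def Ht (T G : Type*) [LinearOrder T] [Zero G] [LT G] (t : T) : Set (T → G) :=
  {f ∈ Gamma T G | ∀ s, s < t → f s = 0}

/-- The dual T-isolated subgroup `dH_t`: elements of Γ vanishing at and before `t`. -/
def dHt (T G : Type*) [LinearOrder T] [Zero G] [LT G] (t : T) : Set (T → G) :=
  {f ∈ Gamma T G | ∀ s, s ≤ t → f s = 0}

/-- `X` and `Y` are immediate neighbors in `B` (ordered by inclusion). -/
def ImmNbr {α : Type*} (B : Set (Set α)) (X Y : Set α) : Prop :=
  X ∈ B ∧ Y ∈ B ∧ X ⊂ Y ∧ ¬∃ Z ∈ B, X ⊂ Z ∧ Z ⊂ Y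

/-- `ISet B` is the set of members of `B` having an immediate predecessor in `B`. -/
def ISet {α : Type*} (B : Set (Set α)) : Set (Set α) := {Y | ∃ X, ImmNbr B X Y}

/-- `IPSet B` is the set of members of `B` having an immediate successor in `B`. -/
def IPSet {α : Type*} (B : Set (Set α)) : Set (Set α) := {X | ∃ Y, ImmNbr B X Y}

namespace Stmt10Aux

variable {T G : Type*} [LinearOrder T] [AddCommGroup G] [LinearOrder G] [IsOrderedAddMonoid G]

/-- The function equal to `e` at `t` and `0` elsewhere. -/
def sing (t : T) (e : G) : T → G := fun s => if s = t then e else 0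

lemma sing_same (t : T) (e : G) : sing t e t = e := if_pos rfl

lemma sing_ne {s t : T} (h : s ≠ t) (e : G) : sing t e s = 0 := if_neg h

lemma gamma_zero : (0 : T → G) ∈ Gamma T G :=
  Set.IsWF.mono Set.isWF_empty (fun _ hs => hs rfl)

lemma gamma_add {f g : T → G} (hf : f ∈ Gamma T G) (hg : g ∈ Gamma T G) :
    f + g ∈ Gamma T G :=
  Set.IsWF.mono (Set.IsWF.union hf hg) (Function.support_add f g)

lemma gamma_neg {f : T → G} (hf : f ∈ Gamma T G) : -f ∈ Gamma T G := by
  have : Function.support (-f) = Function.support f := by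
    ext s; simp
  show (Function.support (-f)).IsWF
  rw [this]; exact hf

lemma gamma_single (t : T) (e : G) : sing t e ∈ Gamma T G := by
  refine Set.IsWF.mono (Set.Finite.isWF (Set.finite_singleton t)) ?_
  intro s hs
  by_contra hst
  exact hs (sing_ne hst e)

lemma exists_first {f : T → G} (hf : f ∈ Gamma T G) (h0 : f ≠ 0) :
    ∃ t0, (∀ s, s < t0 → f s = 0) ∧ f t0 ≠ 0 := by
  have hne : (Function.support f).Nonempty := Function.support_nonempty_iff.mpr h0
  refine ⟨hf.min hne, ?_, hf.min_mem hne⟩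
  intro s hs
  by_contra h
  exact hf.not_lt_min hne h hs

/-- The subgroup `HU U` of functions supported in `U`. -/
def HU (T G : Type*) [LinearOrder T] [AddCommGroup G] [LinearOrder G] [IsOrderedAddMonoid G] (U : Set T) :
    Set (T → G) :=
  {f | f ∈ Gamma T G ∧ ∀ s, f s ≠ 0 → s ∈ U}

def Upper (U : Set T) : Prop := ∀ a ∈ U, ∀ b, a ≤ b → b ∈ U

/-- The upper set associated to a subgroup. -/
def UH (H : Set (T → G)) : Set T := {t | ∃ f ∈ H, f t ≠ 0}

lemma hu_mono {U V : Set T} (h : V ⊆ U) : HU T G V ⊆ HU T G U :=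
  fun f hf => ⟨hf.1, fun s hs => h (hf.2 s hs)⟩

lemma single_mem_hu {U : Set T} {t : T} (ht : t ∈ U) (e : G) :
    sing t e ∈ HU T G U := by
  refine ⟨gamma_single t e, fun s hs => ?_⟩
  by_cases h : s = t
  · exact h ▸ ht
  · exact absurd (sing_ne h e) hs

lemma hu_ssubset [Nontrivial G] {U V : Set T} (hVU : V ⊆ U) {t : T}
    (htU : t ∈ U) (htV : t ∉ V) : HU T G V ⊂ HU T G U := by
  obtain ⟨e, he⟩ := exists_ne (0 : G)
  refine ⟨hu_mono hVU, fun hsub => ?_⟩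
  have h1 : sing t e ∈ HU T G V := hsub (single_mem_hu htU e)
  exact htV (h1.2 t (by rw [sing_same]; exact he))

lemma hu_isolated {U : Set T} (hU : Upper U) : IsIsolated T G (HU T G U) := by
  refine ⟨fun f hf => hf.1, ⟨gamma_zero, fun s hs => absurd rfl hs⟩, ?_, ?_, ?_⟩
  · rintro f ⟨hfΓ, hfU⟩ g ⟨hgΓ, hgU⟩
    refine ⟨gamma_add hfΓ hgΓ, fun s hs => ?_⟩
    by_cases hf0 : f s = 0
    · exact hgU s (fun h => hs (by simp [Pi.add_apply, hf0, h]))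
    · exact hfU s hf0
  · rintro f ⟨hfΓ, hfU⟩
    exact ⟨gamma_neg hfΓ, fun s hs => hfU s (fun h => hs (by simp [Pi.neg_apply, h]))⟩
  · rintro h ⟨hhΓ, hhU⟩ g hgΓ h0g hgh
    refine ⟨hgΓ, fun s hs => ?_⟩
    rcases h0g with h0g | ⟨t1, h1, h1lt⟩
    · exact absurd (congrFun h0g s).symm hs
    rcases hgh with rfl | ⟨t2, h2, h2lt⟩
    · exact hhU s hs
    have hg1 : (0 : G) < g t1 := h1lt
    have ht1s : t1 ≤ s := by
      by_contra hlt
      exact hs ((h1 s (not_le.mp hlt)).symm)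
    rcases lt_trichotomy t2 t1 with hc | hc | hc
    · have hpos : (0 : G) < h t2 := by
        have hg2 : g t2 = 0 := (h1 t2 hc).symm
        rw [← hg2]; exact h2lt
      exact hU t2 (hhU t2 hpos.ne') s (le_trans hc.le ht1s)
    · have hg1' : (0 : G) < g t2 := by rw [hc]; exact hg1
      have hpos : (0 : G) < h t2 := lt_trans hg1' h2lt
      exact hU t2 (hhU t2 hpos.ne') s (le_trans hc.le ht1s)
    · have hpos : (0 : G) < h t1 := by rw [← h2 t1 hc]; exact hg1
      exact hU t1 (hhU t1 hpos.ne') s ht1s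

/-- From an element of `H` that is nonzero at `a`, produce a "positive" element of `H`
whose first nonzero value is positive and occurs at some `t0 ≤ a`. -/
lemma pos_rep {H : Set (T → G)} (hH : IsIsolated T G H) {f : T → G} (hf : f ∈ H)
    {a : T} (hfa : f a ≠ 0) :
    ∃ h ∈ H, ∃ t0, t0 ≤ a ∧ (∀ u, u < t0 → h u = 0) ∧ 0 < h t0 := by
  have hfΓ : f ∈ Gamma T G := hH.1 hf
  have hf0 : f ≠ 0 := fun h => hfa (congrFun h a)
  obtain ⟨t0, hvan, hne⟩ := exists_first hfΓ hf0
  have ht0a : t0 ≤ a := by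
    by_contra h
    exact hfa (hvan a (not_le.mp h))
  rcases lt_or_gt_of_ne hne.symm with hpos | hneg
  · exact ⟨f, hf, t0, ht0a, hvan, hpos⟩
  · refine ⟨-f, hH.2.2.2.1 f hf, t0, ht0a, fun u hu => ?_, ?_⟩
    · simp [hvan u hu]
    · simpa using hneg

lemma nsmul_mem {H : Set (T → G)} (hH : IsIsolated T G H) {h : T → G} (hh : h ∈ H) :
    ∀ n : ℕ, n • h ∈ H := by
  intro n
  induction n with
  | zero => simpa using hH.2.1
  | succ n ih =>
    have := hH.2.2.1 _ ih _ hh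
    rwa [succ_nsmul]

lemma uh_upper [Nontrivial G] {H : Set (T → G)} (hH : IsIsolated T G H) :
    Upper (UH H) := by
  rintro a ⟨f, hfH, hfa⟩ b hab
  rcases eq_or_lt_of_le hab with rfl | hab
  · exact ⟨f, hfH, hfa⟩
  obtain ⟨h, hhH, t0, ht0a, hvan, hpos⟩ := pos_rep hH hfH hfa
  obtain ⟨e, he⟩ := exists_ne (0 : G)
  have he'pos : (0 : G) < |e| := abs_pos.mpr he
  have ht0b : t0 < b := lt_of_le_of_lt ht0a hab
  have hδ : sing b |e| ∈ H := by
    refine hH.2.2.2.2 h hhH _ (gamma_single b |e|) ?_ ?_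
    · refine Or.inr ⟨b, fun s hs => ?_, ?_⟩
      · exact (sing_ne (ne_of_lt hs) |e|).symm
      · rw [sing_same]; exact he'pos
    · refine Or.inr ⟨t0, fun s hs => ?_, ?_⟩
      · rw [sing_ne (ne_of_lt (lt_trans hs ht0b)) |e|, hvan s hs]
      · rw [sing_ne (ne_of_lt ht0b) |e|]
        exact hpos
  exact ⟨sing b |e|, hδ, by rw [sing_same]; exact he'pos.ne'⟩

lemma eq_hu [Archimedean G] {H : Set (T → G)} (hH : IsIsolated T G H) :
    H = HU T G (UH H) := by
  ext f
  constructor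
  · intro hf
    exact ⟨hH.1 hf, fun s hs => ⟨f, hf, hs⟩⟩
  · rintro ⟨hfΓ, hsup⟩
    by_cases hf0 : f = 0
    · exact hf0 ▸ hH.2.1
    obtain ⟨t0, hvan, hne⟩ := exists_first hfΓ hf0
    obtain ⟨w, hwH, hwt0⟩ := hsup t0 hne
    obtain ⟨h, hhH, s0, hs0t0, hhvan, hhpos⟩ := pos_rep hH hwH hwt0
    suffices hsuff : ∀ g : T → G, g ∈ Gamma T G → (∀ u, u < t0 → g u = 0) → 0 < g t0 → g ∈ H by
      rcases lt_or_gt_of_ne hne.symm with hpos | hneg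
      · exact hsuff f hfΓ hvan hpos
      · have : -f ∈ H := by
          refine hsuff (-f) (gamma_neg hfΓ) (fun u hu => by simp [hvan u hu]) (by simpa using hneg)
        have h2 := hH.2.2.2.1 _ this
        rwa [neg_neg] at h2
    intro g hgΓ hgvan hgpos
    have key : ∃ N : ℕ, lexLE g (N • h) := by
      rcases eq_or_lt_of_le hs0t0 with rfl | hlt
      · obtain ⟨m, hm⟩ := Archimedean.arch (g s0) hhpos
        refine ⟨m + 1, Or.inr ⟨s0, fun u hu => ?_, ?_⟩⟩
        · rw [hgvan u hu, Pi.smul_apply, hhvan u hu, smul_zero]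
        · rw [Pi.smul_apply]
          calc g s0 ≤ m • h s0 := hm
            _ < (m + 1) • h s0 := by
              rw [succ_nsmul]; exact lt_add_of_pos_right _ hhpos
      · refine ⟨1, Or.inr ⟨s0, fun u hu => ?_, ?_⟩⟩
        · rw [hgvan u (lt_trans hu hlt), Pi.smul_apply, hhvan u hu, smul_zero]
        · rw [hgvan s0 hlt, Pi.smul_apply, one_smul]
          exact hhpos
    obtain ⟨N, hN⟩ := key
    refine hH.2.2.2.2 (N • h) (nsmul_mem hH hhH N) g hgΓ ?_ hN
    exact Or.inr ⟨t0, fun s hs => (hgvan s hs).symm, hgpos⟩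

lemma ht_eq (t : T) : Ht T G t = HU T G {s | t ≤ s} := by
  ext f
  constructor
  · rintro ⟨hΓ, hv⟩
    refine ⟨hΓ, fun s hs => ?_⟩
    by_contra h
    exact hs (hv s (not_le.mp h))
  · rintro ⟨hΓ, hv⟩
    refine ⟨hΓ, fun s hs => ?_⟩
    by_contra h
    exact absurd (hv s h) (not_le.mpr hs)

lemma dht_eq (t : T) : dHt T G t = HU T G {s | t < s} := by
  ext f
  constructor
  · rintro ⟨hΓ, hv⟩
    refine ⟨hΓ, fun s hs => ?_⟩
    by_contra h
    exact hs (hv s (not_lt.mp h))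
  · rintro ⟨hΓ, hv⟩
    refine ⟨hΓ, fun s hs => ?_⟩
    by_contra h
    exact absurd (hv s h) (not_lt.mpr hs)

end Stmt10Aux

open Stmt10Aux

theorem stmt10 {T G : Type*} [LinearOrder T] [Nonempty T]
    [AddCommGroup G] [LinearOrder G] [IsOrderedAddMonoid G] [Archimedean G] [Nontrivial G] :
    ISet {H : Set (T → G) | IsIsolated T G H} = {S | ∃ t : T, S = Ht T G t} := by
  ext Y
  constructor
  · rintro ⟨X, hXB, hYB, hXY, hno⟩
    have hXiso : IsIsolated T G X := hXB
    have hYiso : IsIsolated T G Y := hYB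
    set V := UH X with hV
    set U := UH Y with hUdef
    have hXeq : X = HU T G V := eq_hu hXiso
    have hYeq : Y = HU T G U := eq_hu hYiso
    have hVup : Upper V := uh_upper hXiso
    have hUup : Upper U := uh_upper hYiso
    obtain ⟨e, he⟩ := exists_ne (0 : G)
    -- V ⊆ U
    have hVU : V ⊆ U := by
      intro v hv
      have h1 : sing v e ∈ X := hXeq ▸ single_mem_hu hv e
      have h2 : sing v e ∈ HU T G U := hYeq ▸ hXY.1 h1
      exact h2.2 v (by rw [sing_same]; exact he)
    -- existence of t ∈ U \ V
    obtain ⟨f, hfY, hfX⟩ := Set.exists_of_ssubset hXY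
    have hfU : f ∈ HU T G U := hYeq ▸ hfY
    have hfV : f ∉ HU T G V := fun h => hfX (hXeq ▸ h)
    have hex : ∃ t, t ∈ U ∧ t ∉ V := by
      by_contra hc
      push_neg at hc
      exact hfV ⟨hfU.1, fun s hs => hc s (hfU.2 s hs)⟩
    obtain ⟨t, htU, htV⟩ := hex
    -- uniqueness of t
    have huniq : ∀ s, s ∈ U → s ∉ V → s = t := by
      intro s hsU hsV
      by_contra hst
      rcases lt_or_gt_of_ne hst with hlt | hlt
      -- in each case we build an intermediate isolated subgroup
      case inl =>
        -- s < t : take W = V ∪ (U ∩ [t,∞)); a := s, b := t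
        refine hno ⟨HU T G (V ∪ {x ∈ U | t ≤ x}), ?_, ?_, ?_⟩
        · exact hu_isolated (by
            rintro a (ha | ⟨haU, hat⟩) b hab
            · exact Or.inl (hVup a ha b hab)
            · exact Or.inr ⟨hUup a haU b hab, le_trans hat hab⟩)
        · rw [hXeq]
          exact hu_ssubset Set.subset_union_left (Or.inr ⟨htU, le_refl t⟩) htV
        · rw [hYeq]
          refine hu_ssubset ?_ hsU ?_
          · rintro a (ha | ⟨haU, _⟩)
            · exact hVU ha
            · exact haU
          · rintro (h | ⟨_, h⟩)
            · exact hsV h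
            · exact absurd h (not_le.mpr hlt)
      case inr =>
        -- t < s : take W = V ∪ (U ∩ [s,∞)); a := t, b := s
        refine hno ⟨HU T G (V ∪ {x ∈ U | s ≤ x}), ?_, ?_, ?_⟩
        · exact hu_isolated (by
            rintro a (ha | ⟨haU, hat⟩) b hab
            · exact Or.inl (hVup a ha b hab)
            · exact Or.inr ⟨hUup a haU b hab, le_trans hat hab⟩)
        · rw [hXeq]
          exact hu_ssubset Set.subset_union_left (Or.inr ⟨hsU, le_refl s⟩) hsV
        · rw [hYeq]
          refine hu_ssubset ?_ htU ?_
          · rintro a (ha | ⟨haU, _⟩)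
            · exact hVU ha
            · exact haU
          · rintro (h | ⟨_, h⟩)
            · exact htV h
            · exact absurd h (not_le.mpr hlt)
    -- U = [t, ∞)
    have hUeq : U = {s | t ≤ s} := by
      ext s
      constructor
      · intro hsU
        by_cases hsV : s ∈ V
        · by_contra h
          exact htV (hVup s hsV t (le_of_lt (not_le.mp h)))
        · exact le_of_eq (huniq s hsU hsV).symm
      · intro hts
        rcases eq_or_lt_of_le hts with rfl | h
        · exact htU
        · exact hUup t htU s (le_of_lt h)
    exact ⟨t, by rw [hYeq, hUeq, ht_eq]⟩
  · rintro ⟨t, rfl⟩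
    refine ⟨dHt T G t, ?_, ?_, ?_, ?_⟩
    · show IsIsolated T G (dHt T G t)
      rw [dht_eq]
      exact hu_isolated (fun a ha b hab => lt_of_lt_of_le ha hab)
    · show IsIsolated T G (Ht T G t)
      rw [ht_eq]
      exact hu_isolated (fun a ha b hab => le_trans ha hab)
    · rw [dht_eq, ht_eq]
      exact hu_ssubset (fun s hs => le_of_lt hs) (le_refl t) (lt_irrefl t)
    · rintro ⟨Z, hZiso, hXZ, hZY⟩
      have hZiso' : IsIsolated T G Z := hZiso
      have hZeq : Z = HU T G (UH Z) := eq_hu hZiso'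
      obtain ⟨e, he⟩ := exists_ne (0 : G)
      have hsub1 : {s | t < s} ⊆ UH Z := by
        intro v hv
        have h1 : sing v e ∈ dHt T G t := by
          rw [dht_eq]; exact single_mem_hu hv e
        have h2 : sing v e ∈ Z := hXZ.1 h1
        exact ⟨sing v e, h2, by rw [sing_same]; exact he⟩
      have hsub2 : UH Z ⊆ {s | t ≤ s} := by
        rintro s ⟨f, hfZ, hfs⟩
        have : f ∈ HU T G {s | t ≤ s} := by
          rw [← ht_eq]; exact hZY.1 hfZ
        exact this.2 s hfs
      by_cases htZ : t ∈ UH Z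
      · have : UH Z = {s | t ≤ s} := by
          refine Set.Subset.antisymm hsub2 (fun s hs => ?_)
          rcases eq_or_lt_of_le hs with rfl | h
          · exact htZ
          · exact hsub1 h
        rw [this, ← ht_eq] at hZeq
        exact hZY.2 (hZeq ▸ Set.Subset.refl _)
      · have : UH Z = {s | t < s} := by
          refine Set.Subset.antisymm (fun s hs => ?_) hsub1
          rcases eq_or_lt_of_le (hsub2 hs) with rfl | h
          · exact absurd hs htZ
          · exact h
        rw [this, ← dht_eq] at hZeq
        exact hXZ.2 (hZeq ▸ Set.Subset.refl _)
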